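/- arXiv:1801.00980 — 2 statements merged into one kernel-verified Lean document; each statement's English description precedes it below -/
import Mathlib

section
/- Suppose μ_i > r for some i, and fix γ > 0. Let π̂(1, ρ) be the unique maximizer of q_ρ(π) = π·(μ - r1) - (ρ/2)·πᵀΣπ over {π ≥ 0, π·1 ≤ 1}. Then there exists ε > 0 such that π̂(1, ρ)·1 > ε for all ρ ∈ (0, γ]. Consequently, inf over ρ ∈ (0, γ] of π̂(1,ρ)ᵀΣπ̂(1,ρ) is strictly positive. -/
open Matrix Set

/-- The feasible set of portfolios: componentwise nonnegative, weights summing to at most `α`. -/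
def feasible (d : ℕ) (α : ℝ) : Set (Fin d → ℝ) :=
  {p : Fin d → ℝ | (∀ i, 0 ≤ p i) ∧ ∑ i, p i ≤ α}

/-- The mean-variance objective `π·(μ - r1) - (ρ/2)·πᵀΣπ`. -/
noncomputable def mvObj {d : ℕ} (S : Matrix (Fin d) (Fin d) ℝ) (μ : Fin d → ℝ) (r ρ : ℝ)
    (p : Fin d → ℝ) : ℝ :=
  p ⬝ᵥ (μ - r • (1 : Fin d → ℝ)) - ρ / 2 * (p ⬝ᵥ S.mulVec p)


theorem stmt6 {d : ℕ} (S : Matrix (Fin d) (Fin d) ℝ) (hS : S.PosDef)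
    (μ : Fin d → ℝ) (r γ : ℝ) (hγ : 0 < γ) (i : Fin d) (hi : r < μ i)
    (P : ℝ → Fin d → ℝ)
    (hP : ∀ ρ : ℝ, 0 < ρ → ρ ≤ γ →
      P ρ ∈ feasible d 1 ∧ IsMaxOn (mvObj S μ r ρ) (feasible d 1) (P ρ)) :
    (∃ ε > (0 : ℝ), ∀ ρ : ℝ, 0 < ρ → ρ ≤ γ → ε < ∑ j, P ρ j) ∧
    (∃ c > (0 : ℝ), ∀ ρ : ℝ, 0 < ρ → ρ ≤ γ → c ≤ P ρ ⬝ᵥ S.mulVec (P ρ)) := by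
  classical
  set a := μ i - r with ha_def
  have ha : 0 < a := sub_pos.mpr hi
  set c := S i i with hc_def
  have hc : 0 < c := by
    have := hS.dotProduct_mulVec_pos (x := Pi.single i 1) (by intro h; simpa using congrFun h i)
    simpa [Matrix.mulVec_single, dotProduct, Pi.single_apply,
      Finset.sum_ite_eq'] using this
  set δ := min (a ^ 2 / (2 * γ * c)) (a / 2) with hδ_def
  have hδ : 0 < δ := lt_min (by positivity) (by positivity)
  set M := ∑ j, |μ j - r| with hM_def
  have haM : a ≤ M := by
    calc a ≤ |μ i - r| := le_abs_self _
    _ ≤ M := Finset.single_le_sum (f := fun j => |μ j - r|) (fun j _ => abs_nonneg _)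
      (Finset.mem_univ i)
  have hM0 : 0 < M := lt_of_lt_of_le ha haM
  set ε := δ / (2 * M) with hε_def
  have hε : 0 < ε := by positivity
  -- ε ≤ 1
  have hδa : δ ≤ a / 2 := min_le_right _ _
  have hε1 : ε ≤ 1 := by
    rw [hε_def, div_le_one (by positivity)]
    nlinarith
  -- Key lower bound on the sum
  have key : ∀ ρ : ℝ, 0 < ρ → ρ ≤ γ → ε < ∑ j, P ρ j := by
    intro ρ h0 h1
    obtain ⟨hfeas, hmax⟩ := hP ρ h0 h1
    set t := min (a / (γ * c)) 1 with ht_def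
    have ht0 : 0 ≤ t := le_min (by positivity) one_pos.le
    have hsingle_feas : (Pi.single i t : Fin d → ℝ) ∈ feasible d 1 := by
      constructor
      · intro j
        rw [Pi.single_apply]
        split <;> simp [ht0]
      · simp only [Pi.single_apply, Finset.sum_ite_eq', Finset.mem_univ, if_true]
        exact min_le_right _ _
    have e1 : mvObj S μ r ρ (Pi.single i t) = t * a - ρ / 2 * (t * (c * t)) := by
      simp [mvObj, Matrix.mulVec_single, dotProduct, Pi.single_apply,
        ite_mul, Finset.sum_ite_eq', ha_def, hc_def, mul_comm]
    have hq : δ ≤ mvObj S μ r ρ (Pi.single i t) := by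
      rw [e1]
      have hmono : ρ / 2 * (t * (c * t)) ≤ γ / 2 * (t * (c * t)) := by
        have : 0 ≤ t * (c * t) := by positivity
        nlinarith
      have main : δ ≤ t * a - γ / 2 * (t * (c * t)) := by
        rcases le_or_gt (a / (γ * c)) 1 with h | h
        · have htv : t = a / (γ * c) := min_eq_left h
          have hval : a / (γ * c) * a - γ / 2 * (a / (γ * c) * (c * (a / (γ * c))))
              = a ^ 2 / (2 * γ * c) := by
            field_simp
            ring
          rw [htv, hval]
          exact min_le_left _ _
        · have htv : t = 1 := min_eq_right h.le
          have hγca : γ * c < a := by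
            have := (one_lt_div (by positivity : (0:ℝ) < γ * c)).mp h
            linarith
          rw [htv]
          nlinarith
      linarith
    have h2 : δ ≤ mvObj S μ r ρ (P ρ) := le_trans hq (hmax hsingle_feas)
    have hquad : 0 ≤ P ρ ⬝ᵥ S.mulVec (P ρ) := by
      have := hS.posSemidef.dotProduct_mulVec_nonneg (P ρ)
      simpa using this
    have h3 : mvObj S μ r ρ (P ρ) ≤ (∑ j, P ρ j) * M := by
      have hdot : P ρ ⬝ᵥ (μ - r • (1 : Fin d → ℝ)) ≤ (∑ j, P ρ j) * M := by
        rw [Finset.sum_mul]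
        simp only [dotProduct, Pi.sub_apply, Pi.smul_apply, Pi.one_apply, smul_eq_mul,
          mul_one]
        apply Finset.sum_le_sum
        intro j _
        have h1 : μ j - r ≤ M := le_trans (le_abs_self _)
          (Finset.single_le_sum (f := fun k => |μ k - r|) (fun k _ => abs_nonneg _)
            (Finset.mem_univ j))
        exact mul_le_mul_of_nonneg_left h1 (hfeas.1 j)
      have : ρ / 2 * (P ρ ⬝ᵥ S.mulVec (P ρ)) ≥ 0 := by positivity
      calc mvObj S μ r ρ (P ρ) ≤ P ρ ⬝ᵥ (μ - r • (1 : Fin d → ℝ)) := by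
            unfold mvObj; linarith
      _ ≤ (∑ j, P ρ j) * M := hdot
    have h4 : δ ≤ (∑ j, P ρ j) * M := le_trans h2 h3
    rw [hε_def]
    rw [div_lt_iff₀ (by positivity)]
    nlinarith
  constructor
  · exact ⟨ε, hε, key⟩
  · -- compactness argument
    set f : (Fin d → ℝ) → ℝ := fun p => p ⬝ᵥ S.mulVec p with hf_def
    have hfcont : Continuous f := by
      simp only [hf_def, dotProduct, Matrix.mulVec]
      fun_prop
    set K : Set (Fin d → ℝ) :=
      {p | (∀ j, 0 ≤ p j) ∧ ε ≤ ∑ j, p j ∧ ∑ j, p j ≤ 1} with hK_def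
    have hKclosed : IsClosed K := by
      have h1 : IsClosed {p : Fin d → ℝ | ∀ j, 0 ≤ p j} := by
        have : {p : Fin d → ℝ | ∀ j, 0 ≤ p j} = ⋂ j, {p | 0 ≤ p j} := by
          ext p; simp
        rw [this]
        exact isClosed_iInter fun j => isClosed_le continuous_const (continuous_apply j)
      have hsum : Continuous fun p : Fin d → ℝ => ∑ j, p j :=
        continuous_finset_sum _ fun j _ => continuous_apply j
      have h2 : IsClosed {p : Fin d → ℝ | ε ≤ ∑ j, p j} :=
        isClosed_le continuous_const hsum
      have h3 : IsClosed {p : Fin d → ℝ | ∑ j, p j ≤ 1} :=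
        isClosed_le hsum continuous_const
      have : K = {p : Fin d → ℝ | ∀ j, 0 ≤ p j} ∩
          ({p | ε ≤ ∑ j, p j} ∩ {p | ∑ j, p j ≤ 1}) := by
        ext p
        simp only [hK_def, Set.mem_setOf_eq, Set.mem_inter_iff]
      rw [this]
      exact h1.inter (h2.inter h3)
    have hKbdd : Bornology.IsBounded K := by
      apply Bornology.IsBounded.subset (Metric.isBounded_closedBall (x := (0 : Fin d → ℝ)) (r := 1))
      intro p hp
      simp only [Metric.mem_closedBall, dist_zero_right]
      rw [pi_norm_le_iff_of_nonneg (by norm_num)]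
      intro j
      rw [Real.norm_eq_abs, abs_le]
      constructor
      · linarith [hp.1 j]
      · calc p j ≤ ∑ k, p k := Finset.single_le_sum (fun k _ => hp.1 k) (Finset.mem_univ j)
        _ ≤ 1 := hp.2.2
    have hKcompact : IsCompact K := Metric.isCompact_of_isClosed_isBounded hKclosed hKbdd
    have hKne : K.Nonempty := by
      have hsum : ∑ j, (Pi.single i ε : Fin d → ℝ) j = ε := by
        simp only [Pi.single_apply, Finset.sum_ite_eq', Finset.mem_univ, if_true]
      refine ⟨Pi.single i ε, ?_, ?_, ?_⟩
      · intro j; rw [Pi.single_apply]; split <;> simp [hε.le]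
      · rw [hsum]
      · rw [hsum]; exact hε1
    obtain ⟨p₀, hp₀K, hmin⟩ := hKcompact.exists_isMinOn hKne hfcont.continuousOn
    have hp₀ne : p₀ ≠ 0 := by
      intro h
      rw [h] at hp₀K
      have := hp₀K.2.1
      simp at this
      linarith
    have hc0 : 0 < f p₀ := by
      have := hS.dotProduct_mulVec_pos hp₀ne
      simpa [hf_def] using this
    refine ⟨f p₀, hc0, fun ρ h0 h1 => ?_⟩
    have hmem : P ρ ∈ K := ⟨(hP ρ h0 h1).1.1, (key ρ h0 h1).le, (hP ρ h0 h1).1.2⟩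
    exact hmin hmem
end

section
/- Let π̂ = Σ⁻¹(μ - r1) with all components strictly positive, ζ = Σ⁻¹1/(1ᵀΣ⁻¹1), and suppose ζ ≥ 0 componentwise. For γ·α < 1ᵀπ̂, the vector π(α) := π̂/(γα) + ζ·(1 - 1ᵀπ̂/(γα)) satisfies π(α)·1 = 1, and whenever additionally π(α) ≥ 0 componentwise, π(α) is the unique maximizer of π·(μ - r1) - (γα/2)πᵀΣπ over {π ≥ 0, π·1 ≤ 1}. -/
open Matrix Set

theorem stmt14 {d : ℕ} (S : Matrix (Fin d) (Fin d) ℝ) (hS : S.PosDef)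
    (μ : Fin d → ℝ) (r γ α : ℝ) (hγ : 0 < γ) (hα₀ : 0 < α) (hα₁ : α ≤ 1)
    (hpos : ∀ i, 0 < S⁻¹.mulVec (μ - r • (1 : Fin d → ℝ)) i)
    (hζnn : ∀ i,
      0 ≤ (((1 : Fin d → ℝ) ⬝ᵥ S⁻¹.mulVec (1 : Fin d → ℝ))⁻¹ •
        S⁻¹.mulVec (1 : Fin d → ℝ)) i)
    (hsmall : γ * α < ∑ j, S⁻¹.mulVec (μ - r • (1 : Fin d → ℝ)) j) :
    let pihat : Fin d → ℝ := S⁻¹.mulVec (μ - r • (1 : Fin d → ℝ))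
    let ζ : Fin d → ℝ :=
      ((1 : Fin d → ℝ) ⬝ᵥ S⁻¹.mulVec (1 : Fin d → ℝ))⁻¹ • S⁻¹.mulVec (1 : Fin d → ℝ)
    let pα : Fin d → ℝ := (γ * α)⁻¹ • pihat + (1 - (∑ j, pihat j) / (γ * α)) • ζ
    (∑ i, pα i = 1) ∧
    ((∀ i, 0 ≤ pα i) →
      pα ∈ feasible d 1 ∧ IsMaxOn (mvObj S μ r (γ * α)) (feasible d 1) pα ∧
      ∀ q ∈ feasible d 1, IsMaxOn (mvObj S μ r (γ * α)) (feasible d 1) q → q = pα) := by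
  intro pihat ζ pα
  set b : Fin d → ℝ := μ - r • (1 : Fin d → ℝ) with hb
  set ρ : ℝ := γ * α with hρ
  have hρ0 : 0 < ρ := mul_pos hγ hα₀
  set s : ℝ := ∑ j, pihat j with hs
  have hsρ : ρ < s := hsmall
  -- d > 0
  have hd : 0 < d := by
    rcases Nat.eq_zero_or_pos d with h | h
    · subst h
      simp only [hs, pihat] at hsρ
      simp at hsρ
      linarith
    · exact h
  have hone : (1 : Fin d → ℝ) ≠ 0 := by
    intro h
    have := congrFun h ⟨0, hd⟩
    simp at this
  set c : ℝ := (1 : Fin d → ℝ) ⬝ᵥ S⁻¹.mulVec (1 : Fin d → ℝ) with hc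
  have hc0 : 0 < c := by
    have := hS.inv.re_dotProduct_pos hone
    simpa [hc] using this
  have hcsum : c = ∑ i, S⁻¹.mulVec (1 : Fin d → ℝ) i := by
    simp [hc, one_dotProduct]
  -- sum of ζ is 1
  have hsumζ : ∑ i, ζ i = 1 := by
    simp only [ζ, Pi.smul_apply, smul_eq_mul, ← Finset.mul_sum, ← hc, ← hcsum]
    exact inv_mul_cancel₀ hc0.ne'
  have hsum1 : ∑ i, pα i = 1 := by
    simp only [pα, Pi.add_apply, Pi.smul_apply, smul_eq_mul, Finset.sum_add_distrib,
      ← Finset.mul_sum, ← hs, hsumζ]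
    field_simp
    ring
  refine ⟨hsum1, ?_⟩
  intro hnn
  -- S is invertible
  have hdet : IsUnit S.det := hS.det_pos.ne'.isUnit
  have hSinv : ∀ v : Fin d → ℝ, S *ᵥ (S⁻¹ *ᵥ v) = v := by
    intro v
    rw [mulVec_mulVec, mul_nonsing_inv _ hdet, one_mulVec]
  -- S applied to pα
  have hSpα : S *ᵥ pα = ρ⁻¹ • b + (1 - s / ρ) • (c⁻¹ • (1 : Fin d → ℝ)) := by
    simp only [pα, pihat, ζ, ← hb, ← hρ, ← hs, ← hc, mulVec_add, mulVec_smul, hSinv]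
    rfl
  set L : ℝ := (s - ρ) * c⁻¹ with hLdef
  have hL : 0 < L := mul_pos (by linarith) (inv_pos.mpr hc0)
  -- gradient identity
  have hgrad : ∀ x : Fin d → ℝ, x ⬝ᵥ b - ρ * (x ⬝ᵥ S *ᵥ pα) = L * ∑ i, x i := by
    intro x
    rw [hSpα]
    rw [dotProduct_add, dotProduct_smul, dotProduct_smul, dotProduct_smul, dotProduct_one]
    simp only [smul_eq_mul, hLdef]
    field_simp
    ring
  -- symmetry of the quadratic form
  have hsym : ∀ u v : Fin d → ℝ, u ⬝ᵥ S *ᵥ v = v ⬝ᵥ S *ᵥ u := by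
    intro u v
    have hT : Sᵀ = S := by
      have := hS.isHermitian.eq
      rwa [conjTranspose_eq_transpose_of_trivial] at this
    rw [dotProduct_mulVec, ← hT, vecMul_transpose, hT, dotProduct_comm]
  -- key expansion
  have hexp : ∀ q : Fin d → ℝ,
      mvObj S μ r ρ q - mvObj S μ r ρ pα
        = L * ((∑ i, q i) - 1) - ρ / 2 * ((q - pα) ⬝ᵥ S *ᵥ (q - pα)) := by
    intro q
    have e1 : (q - pα) ⬝ᵥ S *ᵥ (q - pα)
        = q ⬝ᵥ S *ᵥ q - 2 * (q ⬝ᵥ S *ᵥ pα) + pα ⬝ᵥ S *ᵥ pα := by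
      rw [mulVec_sub, dotProduct_sub, sub_dotProduct, sub_dotProduct, hsym pα q]
      ring
    have e2 := hgrad (q - pα)
    rw [sub_dotProduct, sub_dotProduct] at e2
    have e2' : q ⬝ᵥ b - pα ⬝ᵥ b - ρ * (q ⬝ᵥ S *ᵥ pα - pα ⬝ᵥ S *ᵥ pα)
        = L * ((∑ i, q i) - 1) := by
      rw [← hsum1, ← Finset.sum_sub_distrib]
      simp only [Pi.sub_apply] at e2
      exact e2
    simp only [mvObj, ← hb]
    linear_combination e2' + ρ / 2 * e1
  have hQnn : ∀ q : Fin d → ℝ, 0 ≤ (q - pα) ⬝ᵥ S *ᵥ (q - pα) := by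
    intro q
    rcases eq_or_ne (q - pα) 0 with h | h
    · simp [h]
    · have := hS.re_dotProduct_pos h
      simpa using this.le
  have hfeas : pα ∈ feasible d 1 := ⟨hnn, le_of_eq hsum1⟩
  have hmax : IsMaxOn (mvObj S μ r ρ) (feasible d 1) pα := by
    intro q hq
    have h1 := hexp q
    have h2 : L * ((∑ i, q i) - 1) ≤ 0 :=
      mul_nonpos_of_nonneg_of_nonpos hL.le (by have := hq.2; linarith)
    have h3 := hQnn q
    simp only [Set.mem_setOf_eq]
    nlinarith [h1, h2, h3, hρ0]
  refine ⟨hfeas, hmax, ?_⟩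
  intro q hq hqmax
  have h1 := hexp q
  have h2 : L * ((∑ i, q i) - 1) ≤ 0 :=
    mul_nonpos_of_nonneg_of_nonpos hL.le (by have := hq.2; linarith)
  have h3 := hQnn q
  have h4 : mvObj S μ r ρ pα ≤ mvObj S μ r ρ q := hqmax hfeas
  have hQ0 : (q - pα) ⬝ᵥ S *ᵥ (q - pα) = 0 := by nlinarith
  have h5 : q - pα = 0 := by
    by_contra h
    have := hS.re_dotProduct_pos h
    simp only [RCLike.re_to_real] at this
    rw [show star (q - pα) = q - pα from rfl] at this
    rw [hQ0] at this
    exact lt_irrefl 0 this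
  have := sub_eq_zero.mp h5
  exact this
end
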